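/- For the exponential-drift model with ρ_R ≠ ρ_C, one has for all real s and t: −∫_s^t dx/θ(x) = (τ/θ₊)·[ (s−t)/τ + κ_C·ln( (ρ_C e^{−s/τ}+1)/(ρ_C e^{−t/τ}+1) ) + κ_R·ln( (ρ_R e^{−s/τ}+1)/(ρ_R e^{−t/τ}+1) ) ]. -/

import Mathlib

open Real MeasureTheory intervalIntegral

/-- **Explicit integral of the inverse relaxation time in the exponential-drift model**
(case `ρ_R ≠ ρ_C`). -/
theorem exponential_drift_inverse_relaxation_integral
    (a b τ Rm Rp Cm Cp : ℝ)
    (ha : 0 < a) (hb : 0 < b) (hτ : 0 < τ)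
    (hRm : 0 < Rm) (hRp : 0 < Rp) (hCm : 0 < Cm) (hCp : 0 < Cp)
    (R C θ : ℝ → ℝ)
    (hR : ∀ t, R t = (a * Rm + Rp * Real.exp (t / τ)) / (a + Real.exp (t / τ)))
    (hC : ∀ t, C t = (b * Cm + Cp * Real.exp (t / τ)) / (b + Real.exp (t / τ)))
    (hθ : ∀ t, θ t = R t * C t)
    (θp ρR ρC κC κR : ℝ)
    (hθp : θp = Rp * Cp)
    (hρR : ρR = a * Rm / Rp) (hρC : ρC = b * Cm / Cp) (hρ : ρR ≠ ρC)
    (hκC : κC = (a - ρC) * (b - ρC) / (ρC * (ρC - ρR)))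
    (hκR : κR = (a - ρR) * (b - ρR) / (ρR * (ρR - ρC))) :
    ∀ s t : ℝ,
      -(∫ x in s..t, 1 / θ x) =
        (τ / θp) * ((s - t) / τ +
          κC * Real.log ((ρC * Real.exp (-s / τ) + 1) / (ρC * Real.exp (-t / τ) + 1)) +
          κR * Real.log ((ρR * Real.exp (-s / τ) + 1) / (ρR * Real.exp (-t / τ) + 1))) := by
  have hτ' : τ ≠ 0 := hτ.ne'
  have hρRpos : 0 < ρR := by rw [hρR]; positivity
  have hρCpos : 0 < ρC := by rw [hρC]; positivity
  have hθppos : 0 < θp := by rw [hθp]; positivity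
  -- positivity of θ
  have hθpos : ∀ x, 0 < θ x := by
    intro x
    rw [hθ, hR, hC]
    have h1 := Real.exp_pos (x / τ)
    positivity
  -- continuity of 1/θ
  have hcontθ : Continuous θ := by
    have : θ = fun x => ((a * Rm + Rp * Real.exp (x / τ)) / (a + Real.exp (x / τ))) *
        ((b * Cm + Cp * Real.exp (x / τ)) / (b + Real.exp (x / τ))) := by
      funext x; rw [hθ, hR, hC]
    rw [this]
    have hce : Continuous fun x : ℝ => Real.exp (x / τ) :=
      Real.continuous_exp.comp (continuous_id.div_const τ)
    exact ((continuous_const.add (continuous_const.mul hce)).div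
        (continuous_const.add hce) (fun x => by simp only [Pi.add_apply]; nlinarith [Real.exp_pos (x / τ)])).mul
      ((continuous_const.add (continuous_const.mul hce)).div
        (continuous_const.add hce) (fun x => by nlinarith [Real.exp_pos (x / τ)]))
  have hcont : Continuous fun x => 1 / θ x := by
    simp only [one_div]; exact hcontθ.inv₀ (fun x => (hθpos x).ne')
  -- the antiderivative
  set F : ℝ → ℝ := fun x => (τ / θp) * (x / τ +
      κC * Real.log (ρC * Real.exp (-x / τ) + 1) +
      κR * Real.log (ρR * Real.exp (-x / τ) + 1)) with hF
  have hderiv : ∀ x : ℝ, HasDerivAt F (1 / θ x) x := by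
    intro x
    have hE := Real.exp_pos (x / τ)
    have hE' := Real.exp_pos (-x / τ)
    have hgC : 0 < ρC * Real.exp (-x / τ) + 1 := by positivity
    have hgR : 0 < ρR * Real.exp (-x / τ) + 1 := by positivity
    have hexp : HasDerivAt (fun y : ℝ => Real.exp (-y / τ))
        (Real.exp (-x / τ) * (-1 / τ)) x := by
      have h1 : HasDerivAt (fun y : ℝ => -y / τ) (-1 / τ) x :=
        ((hasDerivAt_id x).neg).div_const τ
      exact h1.exp
    have hlogC : HasDerivAt (fun y => Real.log (ρC * Real.exp (-y / τ) + 1))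
        ((ρC * (Real.exp (-x / τ) * (-1 / τ))) / (ρC * Real.exp (-x / τ) + 1)) x :=
      ((hexp.const_mul ρC).add_const 1).log hgC.ne'
    have hlogR : HasDerivAt (fun y => Real.log (ρR * Real.exp (-y / τ) + 1))
        ((ρR * (Real.exp (-x / τ) * (-1 / τ))) / (ρR * Real.exp (-x / τ) + 1)) x :=
      ((hexp.const_mul ρR).add_const 1).log hgR.ne'
    have hid : HasDerivAt (fun y : ℝ => y / τ) (1 / τ) x := by
      simpa using (hasDerivAt_id x).div_const τ
    have h := (((hid.add (hlogC.const_mul κC)).add (hlogR.const_mul κR)).const_mul (τ / θp))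
    convert h using 1
    case e'_4 => rfl
    case e'_5 => rfl
    case e'_8 => rfl
    -- algebra
    have hEne : Real.exp (-x / τ) = (Real.exp (x / τ))⁻¹ := by
      rw [neg_div, Real.exp_neg]
    have haRm : a * Rm = ρR * Rp := by rw [hρR]; field_simp
    have hbCm : b * Cm = ρC * Cp := by rw [hρC]; field_simp
    rw [hθ, hR, hC, hθp, hκC, hκR, haRm, hbCm, hEne]
    have hd : ρR - ρC ≠ 0 := sub_ne_zero.mpr hρ
    have hd' : ρC - ρR ≠ 0 := sub_ne_zero.mpr (Ne.symm hρ)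
    have hgC' : ρC * (Real.exp (x / τ))⁻¹ + 1 ≠ 0 := by rw [← hEne]; exact hgC.ne'
    have hgR' : ρR * (Real.exp (x / τ))⁻¹ + 1 ≠ 0 := by rw [← hEne]; exact hgR.ne'
    have h1 : a + Real.exp (x / τ) ≠ 0 := by positivity
    have h2 : b + Real.exp (x / τ) ≠ 0 := by positivity
    have h3 : ρR * Rp + Rp * Real.exp (x / τ) ≠ 0 := by positivity
    have h4 : ρC * Cp + Cp * Real.exp (x / τ) ≠ 0 := by positivity
    field_simp
    ring
  intro s t
  have hint : ∀ u v : ℝ, (∫ x in u..v, 1 / θ x) = F v - F u := fun u v =>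
    intervalIntegral.integral_eq_sub_of_hasDerivAt (fun x _ => hderiv x)
      (hcont.intervalIntegrable u v)
  rw [hint s t]
  have hgs : 0 < ρC * Real.exp (-s / τ) + 1 := by positivity
  have hgt : 0 < ρC * Real.exp (-t / τ) + 1 := by positivity
  have hgs' : 0 < ρR * Real.exp (-s / τ) + 1 := by positivity
  have hgt' : 0 < ρR * Real.exp (-t / τ) + 1 := by positivity
  rw [Real.log_div hgs.ne' hgt.ne', Real.log_div hgs'.ne' hgt'.ne']
  simp only [hF]
  ring
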